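/- Let (M₀, E₀, m, a, b) and (M₀†, E₀†, m†, a†, b†) be two tuples of strictly positive real numbers. Suppose that for every λ ≥ 0 there are given differentiable functions M_λ, E_λ, M_λ†, E_λ† : [0,∞) → ℝ with E_λ(t) > 0 and E_λ†(t) > 0 for all t ≥ 0, satisfying M_λ(0) = M₀, E_λ(0) = E₀, M_λ†(0) = M₀†, E_λ†(0) = E₀†, and for all t ≥ 0: M_λ′(t) = E_λ(t)^m / (1 + E_λ(t)^m) − a·M_λ(t), E_λ′(t) = M_λ(t) − b·E_λ(t) − λ·E_λ(t), and (M_λ†)′(t) = E_λ†(t)^{m†} / (1 + E_λ†(t)^{m†}) − a†·M_λ†(t), (E_λ†)′(t) = M_λ†(t) − b†·E_λ†(t) − λ·E_λ†(t). If M_λ(t) = M_λ†(t) for all λ ≥ 0 and all t ≥ 0, then M₀ = M₀†, E₀ = E₀†, m = m†, a = a†, and b = b†. -/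

import Mathlib

set_option maxHeartbeats 1000000

open Set

open Set

noncomputable def opF (m x : ℝ) : ℝ := x ^ m / (1 + x ^ m)
noncomputable def opF1 (m x : ℝ) : ℝ := m * x ^ (m-1) / (1 + x ^ m)^2
noncomputable def opF2 (m x : ℝ) : ℝ :=
  m*(m-1)*x^(m-2)/(1+x^m)^2 - 2*m^2*x^(2*m-2)/(1+x^m)^3
noncomputable def opF3 (m x : ℝ) : ℝ :=
  m*(m-1)*(m-2)*x^(m-3)/(1+x^m)^2 - 6*m^2*(m-1)*x^(2*m-3)/(1+x^m)^3
    + 6*m^3*x^(3*m-3)/(1+x^m)^4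

lemma denom_pos {m x : ℝ} (hx : 0 < x) : 0 < 1 + x ^ m := by
  have := Real.rpow_pos_of_pos hx m; linarith

lemma hasDerivAt_opF {m x : ℝ} (hx : 0 < x) : HasDerivAt (opF m) (opF1 m x) x := by
  have hpow : HasDerivAt (fun y : ℝ => y ^ m) (m * x ^ (m-1)) x :=
    Real.hasDerivAt_rpow_const (Or.inl hx.ne')
  have hden : HasDerivAt (fun y : ℝ => 1 + y ^ m) (m * x ^ (m-1)) x :=
    (hpow.const_add 1)
  have hne : (1 + x ^ m) ≠ 0 := (denom_pos hx).ne'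
  have h := hpow.div hden hne
  refine h.congr_deriv ?_
  unfold opF1
  field_simp
  ring

lemma rpow_collapse {x : ℝ} (hx : 0 < x) (p q : ℝ) : x ^ (p - q) = x ^ p / x ^ q := by
  rw [Real.rpow_sub hx]

lemma hasDerivAt_opF1 {m x : ℝ} (hx : 0 < x) : HasDerivAt (opF1 m) (opF2 m x) x := by
  have hne : (1 + x ^ m) ≠ 0 := (denom_pos hx).ne'
  have hpow : HasDerivAt (fun y : ℝ => y ^ m) (m * x ^ (m-1)) x :=
    Real.hasDerivAt_rpow_const (Or.inl hx.ne')
  have hnum : HasDerivAt (fun y : ℝ => m * y ^ (m-1)) (m * ((m-1) * x ^ (m-1-1))) x :=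
    (Real.hasDerivAt_rpow_const (Or.inl hx.ne')).const_mul m
  have hden : HasDerivAt (fun y : ℝ => (1 + y ^ m)^2)
      (2 * (1 + x ^ m) ^ 1 * (m * x ^ (m-1))) x := by
    have := (hpow.const_add 1).pow 2
    exact this.congr_deriv (by ring)
  have hne2 : ((1 + x ^ m)^2) ≠ 0 := pow_ne_zero _ hne
  have h := hnum.div hden hne2
  refine h.congr_deriv ?_
  unfold opF2
  have e1 : x ^ (m-1-1) = x ^ m / x^(2:ℕ) := by
    rw [show m-1-1 = m - (2:ℕ) by push_cast; ring, rpow_collapse hx, Real.rpow_natCast]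
  have e2 : x ^ (m-1) = x ^ m / x := by
    rw [rpow_collapse hx, Real.rpow_one]
  have e3 : x ^ (2*m-2) = (x^m)^(2:ℕ) / x^(2:ℕ) := by
    rw [show 2*m-2 = (m+m) - (2:ℕ) by push_cast; ring, rpow_collapse hx,
      Real.rpow_add hx, Real.rpow_natCast]; ring_nf
  rw [show m-2 = m-1-1 by ring, e1, e2, e3]
  field_simp

lemma hasDerivAt_opF2 {m x : ℝ} (hx : 0 < x) : HasDerivAt (opF2 m) (opF3 m x) x := by
  have hne : (1 + x ^ m) ≠ 0 := (denom_pos hx).ne'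
  have hpow : HasDerivAt (fun y : ℝ => y ^ m) (m * x ^ (m-1)) x :=
    Real.hasDerivAt_rpow_const (Or.inl hx.ne')
  have hden2 : HasDerivAt (fun y : ℝ => (1 + y ^ m)^2)
      (2 * (1 + x ^ m) ^ 1 * (m * x ^ (m-1))) x := by
    exact ((hpow.const_add 1).pow 2).congr_deriv (by ring)
  have hden3 : HasDerivAt (fun y : ℝ => (1 + y ^ m)^3)
      (3 * (1 + x ^ m) ^ 2 * (m * x ^ (m-1))) x := by
    exact ((hpow.const_add 1).pow 3).congr_deriv (by ring)
  have hnum1 : HasDerivAt (fun y : ℝ => m*(m-1) * y ^ (m-2))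
      (m*(m-1) * ((m-2) * x ^ (m-2-1))) x :=
    (Real.hasDerivAt_rpow_const (Or.inl hx.ne')).const_mul (m*(m-1))
  have hnum2 : HasDerivAt (fun y : ℝ => 2*m^2 * y ^ (2*m-2))
      (2*m^2 * ((2*m-2) * x ^ (2*m-2-1))) x :=
    (Real.hasDerivAt_rpow_const (Or.inl hx.ne')).const_mul (2*m^2)
  have hne2 : ((1 + x ^ m)^2) ≠ 0 := pow_ne_zero _ hne
  have hne3 : ((1 + x ^ m)^3) ≠ 0 := pow_ne_zero _ hne
  have h := (hnum1.div hden2 hne2).sub (hnum2.div hden3 hne3)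
  refine h.congr_deriv ?_
  unfold opF3
  have e1 : x ^ (m-2-1) = x ^ m / x^(3:ℕ) := by
    rw [show m-2-1 = m - (3:ℕ) by push_cast; ring, rpow_collapse hx, Real.rpow_natCast]
  have e2 : x ^ (m-1) = x ^ m / x := by rw [rpow_collapse hx, Real.rpow_one]
  have e3 : x ^ (m-2) = x ^ m / x^(2:ℕ) := by
    rw [show m-2 = m - (2:ℕ) by push_cast; ring, rpow_collapse hx, Real.rpow_natCast]
  have e4 : x ^ (2*m-2) = (x^m)^(2:ℕ) / x^(2:ℕ) := by
    rw [show 2*m-2 = (m+m) - (2:ℕ) by push_cast; ring, rpow_collapse hx,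
      Real.rpow_add hx, Real.rpow_natCast]; ring_nf
  have e5 : x ^ (2*m-2-1) = (x^m)^(2:ℕ) / x^(3:ℕ) := by
    rw [show 2*m-2-1 = (m+m) - (3:ℕ) by push_cast; ring, rpow_collapse hx,
      Real.rpow_add hx, Real.rpow_natCast]; ring_nf
  have e6 : x ^ (2*m-3) = (x^m)^(2:ℕ) / x^(3:ℕ) := by
    rw [show 2*m-3 = (m+m) - (3:ℕ) by push_cast; ring, rpow_collapse hx,
      Real.rpow_add hx, Real.rpow_natCast]; ring_nf
  have e7 : x ^ (3*m-3) = (x^m)^(3:ℕ) / x^(3:ℕ) := by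
    rw [show 3*m-3 = (m+m+m) - (3:ℕ) by push_cast; ring, rpow_collapse hx,
      Real.rpow_add hx, Real.rpow_add hx, Real.rpow_natCast]; ring_nf
  have e0 : x ^ (m-3) = x ^ m / x^(3:ℕ) := by
    rw [show m-3 = m - (3:ℕ) by push_cast; ring, rpow_collapse hx, Real.rpow_natCast]
  rw [e0, e1, e2, e3, e4, e5, e6, e7]
  have hxne : x ≠ 0 := hx.ne'
  field_simp
  ring

lemma opF1_pos {m x : ℝ} (hm : 0 < m) (hx : 0 < x) : 0 < opF1 m x := by
  unfold opF1
  have h1 : 0 < x ^ (m-1) := Real.rpow_pos_of_pos hx _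
  have h2 : 0 < 1 + x ^ m := denom_pos hx
  positivity

lemma theta1 {m x : ℝ} (hx : 0 < x) :
    x * opF1 m x = m * x^m / (1+x^m)^2 := by
  unfold opF1
  rw [show x ^ (m-1) = x ^ m / x by rw [rpow_collapse hx, Real.rpow_one]]
  have hxne : x ≠ 0 := hx.ne'
  have hne : (1 + x ^ m) ≠ 0 := (denom_pos hx).ne'
  field_simp

lemma theta2 {m x : ℝ} (hx : 0 < x) :
    x^(2:ℕ) * opF2 m x + x * opF1 m x = m^2 * (x^m * (1 - x^m)) / (1+x^m)^3 := by
  unfold opF1 opF2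
  rw [show x ^ (m-1) = x ^ m / x by rw [rpow_collapse hx, Real.rpow_one],
    show x ^ (m-2) = x ^ m / x^(2:ℕ) by
      rw [show m-2 = m - (2:ℕ) by push_cast; ring, rpow_collapse hx, Real.rpow_natCast],
    show x ^ (2*m-2) = (x^m)^(2:ℕ) / x^(2:ℕ) by
      rw [show 2*m-2 = (m+m) - (2:ℕ) by push_cast; ring, rpow_collapse hx,
        Real.rpow_add hx, Real.rpow_natCast]; ring_nf]
  have hxne : x ≠ 0 := hx.ne'
  have hne : (1 + x ^ m) ≠ 0 := (denom_pos hx).ne'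
  field_simp
  ring

lemma theta3 {m x : ℝ} (hx : 0 < x) :
    x^(3:ℕ) * opF3 m x + 3*(x^(2:ℕ) * opF2 m x) + x * opF1 m x
      = m^3 * (x^m * (1 - 4*x^m + (x^m)^(2:ℕ))) / (1+x^m)^4 := by
  unfold opF1 opF2 opF3
  rw [show x ^ (m-1) = x ^ m / x by rw [rpow_collapse hx, Real.rpow_one],
    show x ^ (m-2) = x ^ m / x^(2:ℕ) by
      rw [show m-2 = m - (2:ℕ) by push_cast; ring, rpow_collapse hx, Real.rpow_natCast],
    show x ^ (m-3) = x ^ m / x^(3:ℕ) by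
      rw [show m-3 = m - (3:ℕ) by push_cast; ring, rpow_collapse hx, Real.rpow_natCast],
    show x ^ (2*m-2) = (x^m)^(2:ℕ) / x^(2:ℕ) by
      rw [show 2*m-2 = (m+m) - (2:ℕ) by push_cast; ring, rpow_collapse hx,
        Real.rpow_add hx, Real.rpow_natCast]; ring_nf,
    show x ^ (2*m-3) = (x^m)^(2:ℕ) / x^(3:ℕ) by
      rw [show 2*m-3 = (m+m) - (3:ℕ) by push_cast; ring, rpow_collapse hx,
        Real.rpow_add hx, Real.rpow_natCast]; ring_nf,
    show x ^ (3*m-3) = (x^m)^(3:ℕ) / x^(3:ℕ) by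
      rw [show 3*m-3 = (m+m+m) - (3:ℕ) by push_cast; ring, rpow_collapse hx,
        Real.rpow_add hx, Real.rpow_add hx, Real.rpow_natCast]; ring_nf]
  have hxne : x ≠ 0 := hx.ne'
  have hne : (1 + x ^ m) ≠ 0 := (denom_pos hx).ne'
  field_simp
  ring

noncomputable def opV (b lam : ℝ) (M E : ℝ → ℝ) (t : ℝ) : ℝ := M t - b * E t - lam * E t
noncomputable def opP1 (m a : ℝ) (M E : ℝ → ℝ) (t : ℝ) : ℝ := opF m (E t) - a * M t
noncomputable def opVd (m a b lam : ℝ) (M E : ℝ → ℝ) (t : ℝ) : ℝ :=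
  opP1 m a M E t - b * opV b lam M E t - lam * opV b lam M E t
noncomputable def opP2 (m a b lam : ℝ) (M E : ℝ → ℝ) (t : ℝ) : ℝ :=
  opF1 m (E t) * opV b lam M E t - a * opP1 m a M E t
noncomputable def opP3 (m a b lam : ℝ) (M E : ℝ → ℝ) (t : ℝ) : ℝ :=
  opF2 m (E t) * opV b lam M E t * opV b lam M E t
    + opF1 m (E t) * opVd m a b lam M E t - a * opP2 m a b lam M E t
noncomputable def opP4 (m a b lam : ℝ) (M E : ℝ → ℝ) (t : ℝ) : ℝ :=
  opF3 m (E t) * opV b lam M E t * opV b lam M E t * opV b lam M E t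
    + 3 * opF2 m (E t) * opV b lam M E t * opVd m a b lam M E t
    + opF1 m (E t) * (opP2 m a b lam M E t - b * opVd m a b lam M E t
        - lam * opVd m a b lam M E t)
    - a * opP3 m a b lam M E t

open Set in
lemma transfer {f g : ℝ → ℝ} {d d' t : ℝ} (ht : t ∈ Ici (0:ℝ))
    (hfg : ∀ s ∈ Ici (0:ℝ), f s = g s)
    (hf : HasDerivWithinAt f d (Ici 0) t) (hg : HasDerivWithinAt g d' (Ici 0) t) : d = d' :=
  (uniqueDiffOn_Ici 0 t ht).eq_deriv _ hf (hg.congr hfg (hfg t ht))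

open Set in
lemma chain {m a b lam : ℝ} {M E : ℝ → ℝ}
    (hE : ∀ t, 0 ≤ t → 0 < E t)
    (hM' : ∀ t, 0 ≤ t →
      HasDerivWithinAt M (E t ^ m / (1 + E t ^ m) - a * M t) (Ici 0) t)
    (hE' : ∀ t, 0 ≤ t →
      HasDerivWithinAt E (M t - b * E t - lam * E t) (Ici 0) t) :
    (∀ t, 0 ≤ t → HasDerivWithinAt (opP1 m a M E) (opP2 m a b lam M E t) (Ici 0) t) ∧
    (∀ t, 0 ≤ t → HasDerivWithinAt (opP2 m a b lam M E) (opP3 m a b lam M E t) (Ici 0) t) ∧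
    (∀ t, 0 ≤ t → HasDerivWithinAt (opP3 m a b lam M E) (opP4 m a b lam M E t) (Ici 0) t) := by
  -- derivative of V
  have hV : ∀ t, 0 ≤ t → HasDerivWithinAt (opV b lam M E)
      (opVd m a b lam M E t) (Ici 0) t := by
    intro t ht
    have h := ((hM' t ht).sub ((hE' t ht).const_mul b)).sub ((hE' t ht).const_mul lam)
    refine h.congr_deriv ?_ <;> (try simp only [opVd, opP1, opV, opF]) <;> (try ring)
  have hP1 : ∀ t, 0 ≤ t → HasDerivWithinAt (opP1 m a M E)
      (opP2 m a b lam M E t) (Ici 0) t := by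
    intro t ht
    have hcomp := (hasDerivAt_opF (m := m) (hE t ht)).comp_hasDerivWithinAt t (hE' t ht)
    have h := hcomp.sub ((hM' t ht).const_mul a)
    refine h.congr_deriv ?_ <;> (try simp only [opP2, opP1, opV, opF]) <;> (try ring)
  have hP2 : ∀ t, 0 ≤ t → HasDerivWithinAt (opP2 m a b lam M E)
      (opP3 m a b lam M E t) (Ici 0) t := by
    intro t ht
    have hcomp := (hasDerivAt_opF1 (m := m) (hE t ht)).comp_hasDerivWithinAt t (hE' t ht)
    have h := (hcomp.mul (hV t ht)).sub ((hP1 t ht).const_mul a)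
    refine h.congr_deriv ?_ <;> (try simp only [opP3, opP2, opP1, opV, opVd, opF, Function.comp]) <;> (try ring)
  refine ⟨hP1, hP2, ?_⟩
  intro t ht
  have hcomp2 := (hasDerivAt_opF2 (m := m) (hE t ht)).comp_hasDerivWithinAt t (hE' t ht)
  have hcomp1 := (hasDerivAt_opF1 (m := m) (hE t ht)).comp_hasDerivWithinAt t (hE' t ht)
  have hVd : HasDerivWithinAt (opVd m a b lam M E)
      (opP2 m a b lam M E t - b * opVd m a b lam M E t
        - lam * opVd m a b lam M E t) (Ici 0) t :=
    ((hP1 t ht).sub ((hV t ht).const_mul b)).sub ((hV t ht).const_mul lam)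
  have h := (((hcomp2.mul (hV t ht)).mul (hV t ht)).add
      (hcomp1.mul hVd)).sub ((hP2 t ht).const_mul a)
  refine h.congr_deriv ?_ <;> (try simp only [opP4, opP3, opP2, opP1, opV, opVd, opF, opF1, opF2, opF3, Function.comp, Pi.mul_apply]) <;> (try ring)

lemma identify_ms {m m' s s' : ℝ} (hm : 0 < m) (hm' : 0 < m') (hs : 0 < s) (hs' : 0 < s')
    (Hi : m*s*(1+s')^2 = m'*s'*(1+s)^2)
    (Hii : m^2*(s*(1-s))*(1+s')^3 = m'^2*(s'*(1-s'))*(1+s)^3)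
    (Hiii : m^3*(s*(1-4*s+s^2))*(1+s')^4 = m'^3*(s'*(1-4*s'+s'^2))*(1+s)^4) :
    m = m' ∧ s = s' := by
  have hX : (0:ℝ) < 1 + s := by linarith
  have hY : (0:ℝ) < 1 + s' := by linarith
  have hApos : (0:ℝ) < m*s*(1+s')^2 := by positivity
  have Hq : m*(1-s)*(1+s') = m'*(1-s')*(1+s) := by
    apply mul_left_cancel₀ hApos.ne'
    calc m*s*(1+s')^2*(m*(1-s)*(1+s')) = m^2*(s*(1-s))*(1+s')^3 := by ring
      _ = m'^2*(s'*(1-s'))*(1+s)^3 := Hii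
      _ = (m'*s'*(1+s)^2)*(m'*(1-s')*(1+s)) := by ring
      _ = (m*s*(1+s')^2)*(m'*(1-s')*(1+s)) := by rw [← Hi]
  have Hqq : m^2*(1-4*s+s^2)*(1+s')^2 = m'^2*(1-4*s'+s'^2)*(1+s)^2 := by
    apply mul_left_cancel₀ hApos.ne'
    calc m*s*(1+s')^2*(m^2*(1-4*s+s^2)*(1+s')^2) = m^3*(s*(1-4*s+s^2))*(1+s')^4 := by ring
      _ = m'^3*(s'*(1-4*s'+s'^2))*(1+s)^4 := Hiii
      _ = (m'*s'*(1+s)^2)*(m'^2*(1-4*s'+s'^2)*(1+s)^2) := by ring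
      _ = (m*s*(1+s')^2)*(m'^2*(1-4*s'+s'^2)*(1+s)^2) := by rw [← Hi]
  have hsq : (m*(1-s)*(1+s'))^2 = (m'*(1-s')*(1+s))^2 := by rw [Hq]
  have h5 : m*(m*s*(1+s')^2) = m'*(m'*s'*(1+s)^2) := by nlinarith [hsq, Hqq]
  have h6 : m*(m*s*(1+s')^2) = m'*(m*s*(1+s')^2) := by rw [h5, ← Hi]
  have hmm : m = m' := mul_right_cancel₀ hApos.ne' h6
  refine ⟨hmm, ?_⟩
  subst hmm
  have h7 : (1-s)*(1+s') = (1-s')*(1+s) := mul_left_cancel₀ hm.ne' (by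
    calc m*((1-s)*(1+s')) = m*(1-s)*(1+s') := by ring
      _ = m*(1-s')*(1+s) := Hq
      _ = m*((1-s')*(1+s)) := by ring)
  nlinarith [h7]

lemma rpow_base_inj {x y p : ℝ} (hx : 0 < x) (hy : 0 < y) (hp : 0 < p)
    (h : x ^ p = y ^ p) : x = y := by
  rcases lt_trichotomy x y with hlt | heq | hgt
  · exact absurd h (ne_of_lt (Real.rpow_lt_rpow hx.le hlt hp))
  · exact heq
  · exact absurd h.symm (ne_of_lt (Real.rpow_lt_rpow hy.le hgt hp))

/-- Identifiability of the operon model with external input: if for every constant input level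
`λ ≥ 0` the solutions of `Ṁ = E^m/(1+E^m) − aM`, `Ė = M − bE − λE` for two positive parameter
tuples `(M₀, E₀, m, a, b)` and `(M₀†, E₀†, m†, a†, b†)` produce the same measured output
`M_λ(t) = M_λ†(t)` for all `t ≥ 0`, then the two parameter tuples coincide. -/
theorem operon_parameters_identifiable
    (M₀ E₀ m a b M₀' E₀' m' a' b' : ℝ)
    (hM₀ : 0 < M₀) (hE₀ : 0 < E₀) (hm : 0 < m) (ha : 0 < a) (hb : 0 < b)
    (hM₀' : 0 < M₀') (hE₀' : 0 < E₀') (hm' : 0 < m') (ha' : 0 < a') (hb' : 0 < b')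
    (M E M' E' : ℝ → ℝ → ℝ)
    (hEpos : ∀ lam : ℝ, 0 ≤ lam → ∀ t : ℝ, 0 ≤ t → 0 < E lam t)
    (hEpos' : ∀ lam : ℝ, 0 ≤ lam → ∀ t : ℝ, 0 ≤ t → 0 < E' lam t)
    (hMinit : ∀ lam : ℝ, 0 ≤ lam → M lam 0 = M₀)
    (hEinit : ∀ lam : ℝ, 0 ≤ lam → E lam 0 = E₀)
    (hMinit' : ∀ lam : ℝ, 0 ≤ lam → M' lam 0 = M₀')
    (hEinit' : ∀ lam : ℝ, 0 ≤ lam → E' lam 0 = E₀')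
    (hModE : ∀ lam : ℝ, 0 ≤ lam → ∀ t : ℝ, 0 ≤ t →
      HasDerivWithinAt (M lam)
        (E lam t ^ m / (1 + E lam t ^ m) - a * M lam t) (Set.Ici 0) t)
    (hEode : ∀ lam : ℝ, 0 ≤ lam → ∀ t : ℝ, 0 ≤ t →
      HasDerivWithinAt (E lam)
        (M lam t - b * E lam t - lam * E lam t) (Set.Ici 0) t)
    (hModE' : ∀ lam : ℝ, 0 ≤ lam → ∀ t : ℝ, 0 ≤ t →
      HasDerivWithinAt (M' lam)
        (E' lam t ^ m' / (1 + E' lam t ^ m') - a' * M' lam t) (Set.Ici 0) t)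
    (hEode' : ∀ lam : ℝ, 0 ≤ lam → ∀ t : ℝ, 0 ≤ t →
      HasDerivWithinAt (E' lam)
        (M' lam t - b' * E' lam t - lam * E' lam t) (Set.Ici 0) t)
    (hout : ∀ lam : ℝ, 0 ≤ lam → ∀ t : ℝ, 0 ≤ t → M lam t = M' lam t) :
    M₀ = M₀' ∧ E₀ = E₀' ∧ m = m' ∧ a = a' ∧ b = b' := by
  have hMM : M₀ = M₀' := by
    have h := hout 0 le_rfl 0 le_rfl
    rwa [hMinit 0 le_rfl, hMinit' 0 le_rfl] at h
  subst hMM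
  have KEY : ∀ lam : ℝ, 0 ≤ lam →
      (opP1 m a (fun _ => M₀) (fun _ => E₀) 0
        = opP1 m' a' (fun _ => M₀) (fun _ => E₀') 0) ∧
      (opP2 m a b lam (fun _ => M₀) (fun _ => E₀) 0
        = opP2 m' a' b' lam (fun _ => M₀) (fun _ => E₀') 0) ∧
      (opP3 m a b lam (fun _ => M₀) (fun _ => E₀) 0
        = opP3 m' a' b' lam (fun _ => M₀) (fun _ => E₀') 0) ∧
      (opP4 m a b lam (fun _ => M₀) (fun _ => E₀) 0
        = opP4 m' a' b' lam (fun _ => M₀) (fun _ => E₀') 0) := by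
    intro lam hlam
    obtain ⟨hP1, hP2, hP3⟩ := chain (hEpos lam hlam) (hModE lam hlam) (hEode lam hlam)
    obtain ⟨hQ1, hQ2, hQ3⟩ := chain (hEpos' lam hlam) (hModE' lam hlam) (hEode' lam hlam)
    have heq1 : ∀ t ∈ Ici (0:ℝ), opP1 m a (M lam) (E lam) t
        = opP1 m' a' (M' lam) (E' lam) t := fun t ht =>
      transfer ht (fun s hs => hout lam hlam s hs) (hModE lam hlam t ht) (hModE' lam hlam t ht)
    have heq2 : ∀ t ∈ Ici (0:ℝ), opP2 m a b lam (M lam) (E lam) t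
        = opP2 m' a' b' lam (M' lam) (E' lam) t := fun t ht =>
      transfer ht heq1 (hP1 t ht) (hQ1 t ht)
    have heq3 : ∀ t ∈ Ici (0:ℝ), opP3 m a b lam (M lam) (E lam) t
        = opP3 m' a' b' lam (M' lam) (E' lam) t := fun t ht =>
      transfer ht heq2 (hP2 t ht) (hQ2 t ht)
    have heq4 : ∀ t ∈ Ici (0:ℝ), opP4 m a b lam (M lam) (E lam) t
        = opP4 m' a' b' lam (M' lam) (E' lam) t := fun t ht =>
      transfer ht heq3 (hP3 t ht) (hQ3 t ht)
    have h0 : (0:ℝ) ∈ Ici (0:ℝ) := self_mem_Ici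
    refine ⟨?_, ?_, ?_, ?_⟩
    · have h := heq1 0 h0
      simp only [opP1, opV, hMinit lam hlam, hEinit lam hlam, hMinit' lam hlam,
        hEinit' lam hlam] at h ⊢
      exact h
    · have h := heq2 0 h0
      simp only [opP2, opP1, opV, hMinit lam hlam, hEinit lam hlam, hMinit' lam hlam,
        hEinit' lam hlam] at h ⊢
      exact h
    · have h := heq3 0 h0
      simp only [opP3, opP2, opP1, opV, opVd, hMinit lam hlam, hEinit lam hlam,
        hMinit' lam hlam, hEinit' lam hlam] at h ⊢
      exact h
    · have h := heq4 0 h0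
      simp only [opP4, opP3, opP2, opP1, opV, opVd, hMinit lam hlam, hEinit lam hlam,
        hMinit' lam hlam, hEinit' lam hlam] at h ⊢
      exact h
  -- extract the needed coefficient identities
  have K10 := (KEY 0 le_rfl).1
  have K20 := (KEY 0 le_rfl).2.1
  have K21 := (KEY 1 (by norm_num)).2.1
  have K30 := (KEY 0 le_rfl).2.2.1
  have K31 := (KEY 1 (by norm_num)).2.2.1
  have K32 := (KEY 2 (by norm_num)).2.2.1
  have K40 := (KEY 0 le_rfl).2.2.2
  have K41 := (KEY 1 (by norm_num)).2.2.2
  have K42 := (KEY 2 (by norm_num)).2.2.2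
  have K43 := (KEY 3 (by norm_num)).2.2.2
  simp only [opP4, opP3, opP2, opP1, opV, opVd] at K10 K20 K21 K30 K31 K32 K40 K41 K42 K43
  ring_nf at K10 K20 K21 K30 K31 K32 K40 K41 K42 K43
  have g_lin : E₀ * opF1 m E₀ = E₀' * opF1 m' E₀' := by linarith
  have g_const : opF1 m E₀ * (M₀ - b*E₀) - a * (opF m E₀ - a * M₀)
      = opF1 m' E₀' * (M₀ - b'*E₀') - a' * (opF m' E₀' - a' * M₀) := by
    ring_nf; linarith
  have g_quad : E₀^(2:ℕ) * opF2 m E₀ + E₀ * opF1 m E₀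
      = E₀'^(2:ℕ) * opF2 m' E₀' + E₀' * opF1 m' E₀' := by
    ring_nf; linarith
  have g_cub : E₀^(3:ℕ) * opF3 m E₀ + 3*(E₀^(2:ℕ) * opF2 m E₀) + E₀ * opF1 m E₀
      = E₀'^(3:ℕ) * opF3 m' E₀' + 3*(E₀'^(2:ℕ) * opF2 m' E₀') + E₀' * opF1 m' E₀' := by
    ring_nf; linarith
  -- translate via the theta identities
  have hs : 0 < E₀ ^ m := Real.rpow_pos_of_pos hE₀ m
  have hs' : 0 < E₀' ^ m' := Real.rpow_pos_of_pos hE₀' m'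
  have hXne : ((1 + E₀ ^ m)^2 : ℝ) ≠ 0 := by positivity
  have hYne : ((1 + E₀' ^ m')^2 : ℝ) ≠ 0 := by positivity
  have hX3ne : ((1 + E₀ ^ m)^3 : ℝ) ≠ 0 := by positivity
  have hY3ne : ((1 + E₀' ^ m')^3 : ℝ) ≠ 0 := by positivity
  have hX4ne : ((1 + E₀ ^ m)^4 : ℝ) ≠ 0 := by positivity
  have hY4ne : ((1 + E₀' ^ m')^4 : ℝ) ≠ 0 := by positivity
  have Hi : m * E₀^m * (1 + E₀'^m')^2 = m' * E₀'^m' * (1 + E₀^m)^2 := by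
    have e : m * E₀^m / (1+E₀^m)^2 = m' * E₀'^m' / (1+E₀'^m')^2 := by
      rw [← theta1 hE₀, ← theta1 hE₀']; exact g_lin
    exact (div_eq_div_iff hXne hYne).mp e
  have Hii : m^2 * (E₀^m * (1 - E₀^m)) * (1 + E₀'^m')^3
      = m'^2 * (E₀'^m' * (1 - E₀'^m')) * (1 + E₀^m)^3 := by
    have e : m^2 * (E₀^m * (1 - E₀^m)) / (1+E₀^m)^3
        = m'^2 * (E₀'^m' * (1 - E₀'^m')) / (1+E₀'^m')^3 := by
      rw [← theta2 hE₀, ← theta2 hE₀']; exact g_quad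
    exact (div_eq_div_iff hX3ne hY3ne).mp e
  have Hiii : m^3 * (E₀^m * (1 - 4*E₀^m + (E₀^m)^(2:ℕ))) * (1 + E₀'^m')^4
      = m'^3 * (E₀'^m' * (1 - 4*E₀'^m' + (E₀'^m')^(2:ℕ))) * (1 + E₀^m)^4 := by
    have e : m^3 * (E₀^m * (1 - 4*E₀^m + (E₀^m)^(2:ℕ))) / (1+E₀^m)^4
        = m'^3 * (E₀'^m' * (1 - 4*E₀'^m' + (E₀'^m')^(2:ℕ))) / (1+E₀'^m')^4 := by
      rw [← theta3 hE₀, ← theta3 hE₀']; exact g_cub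
    exact (div_eq_div_iff hX4ne hY4ne).mp e
  obtain ⟨hmm, hss⟩ := identify_ms hm hm' hs hs'
    (by linarith [Hi]) (by linarith [Hii]) (by linarith [Hiii])
  subst hmm
  have hEE : E₀ = E₀' := rpow_base_inj hE₀ hE₀' hm hss
  subst hEE
  have haa : a = a' := by
    have h : a * M₀ = a' * M₀ := by linarith [K10]
    exact mul_right_cancel₀ hM₀.ne' h
  subst haa
  have hbb : b = b' := by
    have hc1 : 0 < opF1 m E₀ := opF1_pos hm hE₀
    have h : opF1 m E₀ * E₀ * b = opF1 m E₀ * E₀ * b' := by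
      ring_nf at g_const ⊢; linarith
    exact mul_left_cancel₀ (by positivity) h
  subst hbb
  exact ⟨rfl, rfl, rfl, rfl, rfl⟩
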